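/- Let n ≥ 2, let Ω ⊂ ℝⁿ be a bounded open set, x₀ ∈ Ω and τ > 0 with the open ball B(x₀, τ) contained in Ω, and let ϱ > 0. Define w_τ^ϱ(x, y) := e^{−y/2}·ω_τ^ϱ(x) for (x, y) ∈ Ω × (0, +∞), and set h := 2·ω_n·τ^{n−2}·(1 − 2^{−n}) + |Ω|/8, where |Ω| is the Lebesgue measure of Ω. Let β : Ω → ℝ be a measurable essentially bounded function with β(x) ≥ β₀ for almost every x ∈ Ω, where β₀ > 0, and let F : ℝ → ℝ be continuous with F(t) ≥ 0 for every t ≥ 0. Then ∫_Ω β(x)·F(ω_τ^ϱ(x)) dx ≥ [β₀·ω_n·τⁿ·F(ϱ) / (2ⁿ·h·ϱ²)] · (1/2)∫_{Ω×(0,+∞)} |∇w_τ^ϱ(x, y)|² dx dy. -/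

import Mathlib

open Filter Topology MeasureTheory

/-- The truncated cone `ω_τ^ϱ` centered at `x₀`. -/
noncomputable def truncatedCone {n : ℕ} (x₀ : EuclideanSpace ℝ (Fin n)) (τ ϱ : ℝ) :
    EuclideanSpace ℝ (Fin n) → ℝ := fun x =>
  if dist x x₀ ≤ τ / 2 then ϱ
  else if dist x x₀ < τ then (2 * ϱ / τ) * (τ - dist x x₀)
  else 0

/-- `ω_n = π^{n/2}/Γ(1 + n/2)`, the Lebesgue measure of the unit ball of `ℝⁿ`. -/
noncomputable def unitBallVolume (n : ℕ) : ℝ :=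
  Real.pi ^ ((n : ℝ) / 2) / Real.Gamma (1 + (n : ℝ) / 2)

/-- Projection of a point of `ℝ^{n+1}` onto its first `n` coordinates. -/
noncomputable def projFirst {n : ℕ} (p : EuclideanSpace ℝ (Fin (n + 1))) :
    EuclideanSpace ℝ (Fin n) := WithLp.toLp 2 (fun i : Fin n => p i.castSucc)

/-- The last coordinate of a point of `ℝ^{n+1}`. -/
noncomputable def lastCoord {n : ℕ} (p : EuclideanSpace ℝ (Fin (n + 1))) : ℝ :=
  p (Fin.last n)

/-- The function `w_τ^ϱ(x, y) = e^{−y/2}·ω_τ^ϱ(x)` on `ℝⁿ × (0, ∞) ⊆ ℝ^{n+1}`. -/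
noncomputable def cylinderFun {n : ℕ} (x₀ : EuclideanSpace ℝ (Fin n)) (τ ϱ : ℝ) :
    EuclideanSpace ℝ (Fin (n + 1)) → ℝ := fun p =>
  Real.exp (-(lastCoord p) / 2) * truncatedCone x₀ τ ϱ (projFirst p)


open RealInnerProductSpace in
lemma opNorm_sq_eq_sum {m : ℕ} (φ : EuclideanSpace ℝ (Fin m) →L[ℝ] ℝ) :
    ‖φ‖ ^ 2 = ∑ i, (φ (EuclideanSpace.single i 1)) ^ 2 := by
  set u := (InnerProductSpace.toDual ℝ (EuclideanSpace ℝ (Fin m))).symm φ with hu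
  have h1 : ‖φ‖ = ‖u‖ := ((InnerProductSpace.toDual ℝ _).symm.norm_map φ).symm
  have h2 : ∀ i, φ (EuclideanSpace.single i 1) = u i := by
    intro i
    have : ⟪u, EuclideanSpace.single i 1⟫ = φ (EuclideanSpace.single i 1) :=
      InnerProductSpace.toDual_symm_apply
    rw [← this, EuclideanSpace.inner_single_right]
    simp
  simp_rw [h2, h1, EuclideanSpace.norm_eq]
  rw [Real.sq_sqrt (by positivity)]
  simp [Real.norm_eq_abs, sq_abs]

noncomputable def projCLM (n : ℕ) : EuclideanSpace ℝ (Fin (n + 1)) →L[ℝ] EuclideanSpace ℝ (Fin n) :=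
  LinearMap.mkContinuous
    { toFun := fun p => WithLp.toLp 2 (fun i : Fin n => p i.castSucc)
      map_add' := fun p q => rfl
      map_smul' := fun c p => rfl } 1 (by
    intro p
    rw [one_mul]
    rw [show ‖p‖ = Real.sqrt (∑ i, ‖p i‖ ^ 2) from EuclideanSpace.norm_eq p]
    rw [EuclideanSpace.norm_eq]
    apply Real.sqrt_le_sqrt
    rw [Fin.sum_univ_castSucc]
    exact le_add_of_nonneg_right (by positivity))

lemma projCLM_coe (n : ℕ) : ⇑(projCLM n) = (projFirst : EuclideanSpace ℝ (Fin (n+1)) → _) := rfl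

lemma lastCoord_coe (n : ℕ) :
    ⇑(EuclideanSpace.proj (Fin.last n) : EuclideanSpace ℝ (Fin (n+1)) →L[ℝ] ℝ)
      = (lastCoord : EuclideanSpace ℝ (Fin (n+1)) → ℝ) := rfl

lemma projCLM_single_last (n : ℕ) : projCLM n (EuclideanSpace.single (Fin.last n) (1:ℝ)) = 0 := by
  ext i
  show EuclideanSpace.single (Fin.last n) (1:ℝ) i.castSucc = 0
  rw [EuclideanSpace.single_apply]
  simp [ne_of_lt (Fin.castSucc_lt_last i)]

lemma projCLM_single_castSucc {n : ℕ} (j : Fin n) :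
    projCLM n (EuclideanSpace.single j.castSucc (1:ℝ)) = EuclideanSpace.single j 1 := by
  ext i
  show EuclideanSpace.single j.castSucc (1:ℝ) i.castSucc = EuclideanSpace.single j (1:ℝ) i
  rw [EuclideanSpace.single_apply, EuclideanSpace.single_apply]
  simp [Fin.castSucc_inj]

lemma proj_norm_le_one {m : ℕ} (i : Fin m) :
    ‖(EuclideanSpace.proj i : EuclideanSpace ℝ (Fin m) →L[ℝ] ℝ)‖ ≤ 1 := by
  apply ContinuousLinearMap.opNorm_le_bound _ zero_le_one
  intro x
  rw [one_mul]
  have : ‖x‖ = Real.sqrt (∑ j, ‖x j‖ ^ 2) := EuclideanSpace.norm_eq x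
  rw [this]
  have h1 : ‖(EuclideanSpace.proj i : EuclideanSpace ℝ (Fin m) →L[ℝ] ℝ) x‖
      = Real.sqrt (‖x i‖ ^ 2) := by
    simp [Real.sqrt_sq_eq_abs]
  rw [h1]
  apply Real.sqrt_le_sqrt
  exact Finset.single_le_sum (f := fun j => ‖x j‖ ^ 2) (fun j _ => by positivity)
    (Finset.mem_univ i)

noncomputable def splitEquiv (n : ℕ) :
    EuclideanSpace ℝ (Fin (n + 1)) ≃ᵐ ℝ × EuclideanSpace ℝ (Fin n) :=
  (MeasurableEquiv.toLp 2 (Fin (n+1) → ℝ)).symm.trans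
    ((MeasurableEquiv.piFinSuccAbove (fun _ => ℝ) (Fin.last n)).trans
      ((MeasurableEquiv.refl ℝ).prodCongr (MeasurableEquiv.toLp 2 (Fin n → ℝ)).symm.symm))

lemma splitEquiv_measurePreserving (n : ℕ) :
    MeasurePreserving (splitEquiv n) volume volume := by
  have h1 := EuclideanSpace.volume_preserving_symm_measurableEquiv_toLp (Fin (n+1))
  have h2 := MeasureTheory.volume_preserving_piFinSuccAbove (fun _ : Fin (n+1) => ℝ) (Fin.last n)
  have h3 : MeasurePreserving
      ((MeasurableEquiv.refl ℝ).prodCongr (MeasurableEquiv.toLp 2 (Fin n → ℝ)).symm.symm)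
      volume volume :=
    (MeasurePreserving.id volume).prod
      ((EuclideanSpace.volume_preserving_symm_measurableEquiv_toLp (Fin n)).symm _)
  exact (h3.comp h2).comp h1

lemma splitEquiv_apply {n : ℕ} (p : EuclideanSpace ℝ (Fin (n + 1))) :
    splitEquiv n p = (lastCoord p, projFirst p) := by
  show ((MeasurableEquiv.piFinSuccAbove (fun _ => ℝ) (Fin.last n)) p |>.1,
    (MeasurableEquiv.toLp 2 (Fin n → ℝ)).symm.symm
      ((MeasurableEquiv.piFinSuccAbove (fun _ => ℝ) (Fin.last n)) p |>.2)) = _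
  refine Prod.ext rfl ?_
  ext i
  show ((MeasurableEquiv.piFinSuccAbove (fun _ => ℝ) (Fin.last n)) p).2 i = p i.castSucc
  simp [MeasurableEquiv.piFinSuccAbove, Fin.succAbove_last, Fin.init]

lemma integrableOn_comp_splitEquiv {n : ℕ} (g : ℝ × EuclideanSpace ℝ (Fin n) → ℝ)
    (s : Set (ℝ × EuclideanSpace ℝ (Fin n)))
    (hg : Integrable g ((volume : Measure (ℝ × EuclideanSpace ℝ (Fin n))).restrict s)) :
    IntegrableOn (fun p => g (splitEquiv n p)) ((splitEquiv n) ⁻¹' s) := by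
  have hre := (splitEquiv_measurePreserving n).restrict_preimage_emb
      (splitEquiv n).measurableEmbedding s
  exact (hre.integrable_comp_emb (splitEquiv n).measurableEmbedding).mpr hg

lemma setIntegral_comp_splitEquiv {n : ℕ} (g : ℝ × EuclideanSpace ℝ (Fin n) → ℝ)
    (s : Set (ℝ × EuclideanSpace ℝ (Fin n))) :
    ∫ p in (splitEquiv n) ⁻¹' s, g (splitEquiv n p) ∂volume = ∫ z in s, g z ∂volume :=
  (splitEquiv_measurePreserving n).setIntegral_preimage_emb
    (splitEquiv n).measurableEmbedding g s


lemma euclid_volume_ball_toReal {n : ℕ} (hn : 1 ≤ n) (x₀ : EuclideanSpace ℝ (Fin n)) {r : ℝ}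
    (hr : 0 ≤ r) : (volume (Metric.ball x₀ r)).toReal = unitBallVolume n * r ^ n := by
  haveI : Nonempty (Fin n) := ⟨⟨0, hn⟩⟩
  rw [EuclideanSpace.volume_ball, Fintype.card_fin]
  have hΓ : 0 < Real.Gamma ((n:ℝ)/2 + 1) := Real.Gamma_pos_of_pos (by positivity)
  have hst : (0:ℝ) ≤ Real.sqrt Real.pi ^ n / Real.Gamma ((n:ℝ)/2 + 1) := by positivity
  rw [ENNReal.toReal_mul, ENNReal.toReal_pow, ENNReal.toReal_ofReal hr,
    ENNReal.toReal_ofReal hst]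
  have h1 : Real.sqrt Real.pi ^ n = Real.pi ^ ((n:ℝ)/2) := by
    rw [Real.sqrt_eq_rpow, ← Real.rpow_natCast (Real.pi ^ ((1:ℝ)/2)) n,
      ← Real.rpow_mul Real.pi_pos.le]
    norm_num
    rw [mul_comm, mul_one_div]
  have h2 : Real.Gamma ((n:ℝ)/2 + 1) = Real.Gamma (1 + (n:ℝ)/2) := by rw [add_comm]
  rw [h1, h2, unitBallVolume]
  ring

lemma euclid_volume_closedBall_toReal {n : ℕ} (hn : 1 ≤ n) (x₀ : EuclideanSpace ℝ (Fin n)) {r : ℝ}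
    (hr : 0 ≤ r) : (volume (Metric.closedBall x₀ r)).toReal = unitBallVolume n * r ^ n := by
  haveI : Nonempty (Fin n) := ⟨⟨0, hn⟩⟩
  rw [Measure.addHaar_closedBall_eq_addHaar_ball]
  exact euclid_volume_ball_toReal hn x₀ hr

lemma unitBallVolume_pos {n : ℕ} : 0 < unitBallVolume n := by
  rw [unitBallVolume]
  have hΓ : 0 < Real.Gamma (1 + (n:ℝ)/2) := Real.Gamma_pos_of_pos (by positivity)
  positivity

lemma truncatedCone_mem_Icc {n : ℕ} (x₀ : EuclideanSpace ℝ (Fin n)) {τ ϱ : ℝ}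
    (hτ : 0 < τ) (hϱ : 0 < ϱ) (x : EuclideanSpace ℝ (Fin n)) :
    truncatedCone x₀ τ ϱ x ∈ Set.Icc 0 ϱ := by
  unfold truncatedCone
  split_ifs with h1 h2
  · exact ⟨hϱ.le, le_refl ϱ⟩
  · push_neg at h1
    constructor
    · apply mul_nonneg (by positivity); linarith
    · rw [show (2 * ϱ / τ) * (τ - dist x x₀) = ϱ * ((2/τ) * (τ - dist x x₀)) by ring]
      nth_rewrite 2 [show ϱ = ϱ * 1 by ring]
      apply mul_le_mul_of_nonneg_left _ hϱ.le
      rw [div_mul_eq_mul_div, div_le_one hτ]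
      linarith
  · exact ⟨le_refl 0, hϱ.le⟩

lemma truncatedCone_measurable {n : ℕ} (x₀ : EuclideanSpace ℝ (Fin n)) (τ ϱ : ℝ) :
    Measurable (truncatedCone x₀ τ ϱ) := by
  unfold truncatedCone
  have hd : Measurable fun x : EuclideanSpace ℝ (Fin n) => dist x x₀ :=
    (continuous_id.dist continuous_const).measurable
  refine Measurable.ite (measurableSet_le hd measurable_const) measurable_const ?_
  refine Measurable.ite (measurableSet_lt hd measurable_const) ?_ measurable_const
  exact (measurable_const.mul (measurable_const.sub hd))

/-- Pointwise bound on `‖fderiv‖²` away from the two singular spheres. -/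
lemma fderiv_cylinder_bound {n : ℕ} (x₀ : EuclideanSpace ℝ (Fin n)) {τ ϱ : ℝ}
    (hτ : 0 < τ) (hϱ : 0 < ϱ) (p : EuclideanSpace ℝ (Fin (n + 1)))
    (h1 : dist (projFirst p) x₀ ≠ τ / 2) (h2 : dist (projFirst p) x₀ ≠ τ) :
    ‖fderiv ℝ (cylinderFun x₀ τ ϱ) p‖ ^ 2 ≤
      Real.exp (-(lastCoord p)) *
        ((Metric.ball x₀ τ \ Metric.closedBall x₀ (τ/2)).indicator
          (fun _ => 4 * ϱ^2 / τ^2) (projFirst p) + ϱ^2 / 4) := by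
  classical
  set L : EuclideanSpace ℝ (Fin (n+1)) →L[ℝ] ℝ := EuclideanSpace.proj (Fin.last n) with hL
  set P := projCLM n with hP
  set y := lastCoord p with hy
  have hcontproj : Continuous (projFirst : EuclideanSpace ℝ (Fin (n+1)) → _) := by
    rw [← projCLM_coe]; exact (projCLM n).continuous
  -- derivative of the exponential factor
  have h0 : HasFDerivAt (fun q : EuclideanSpace ℝ (Fin (n+1)) => -(lastCoord q)/2)
      ((-(1/2) : ℝ) • L) p := by
    have hfun : (fun q : EuclideanSpace ℝ (Fin (n+1)) => -(lastCoord q)/2)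
        = fun q => ((-(1/2) : ℝ) • L) q := by
      funext q
      simp only [ContinuousLinearMap.smul_apply, smul_eq_mul]
      have : L q = lastCoord q := rfl
      rw [this]; ring
    rw [hfun]
    exact ((-(1/2) : ℝ) • L).hasFDerivAt
  have hf₁ : HasFDerivAt (fun q : EuclideanSpace ℝ (Fin (n+1)) => Real.exp (-(lastCoord q)/2))
      (Real.exp (-y/2) • ((-(1/2) : ℝ) • L)) p := by
    have := (Real.hasDerivAt_exp (-y/2)).comp_hasFDerivAt p h0; exact this
  have hLlast : L (EuclideanSpace.single (Fin.last n) (1:ℝ)) = 1 := by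
    show EuclideanSpace.single (Fin.last n) (1:ℝ) (Fin.last n) = 1
    rw [EuclideanSpace.single_apply]; simp
  have hLcast : ∀ j : Fin n, L (EuclideanSpace.single j.castSucc (1:ℝ)) = 0 := by
    intro j
    show EuclideanSpace.single j.castSucc (1:ℝ) (Fin.last n) = 0
    rw [EuclideanSpace.single_apply]
    simp [(Fin.castSucc_lt_last j).ne']
  have hexpsq : Real.exp (-y/2) ^ 2 = Real.exp (-y) := by
    rw [sq, ← Real.exp_add]; ring_nf
  rcases lt_trichotomy (dist (projFirst p) x₀) (τ/2) with hd | hd | hd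
  · -- inner ball
    have hev : cylinderFun x₀ τ ϱ =ᶠ[𝓝 p]
        fun q => Real.exp (-(lastCoord q)/2) * ϱ := by
      have hU : IsOpen {q : EuclideanSpace ℝ (Fin (n+1)) | dist (projFirst q) x₀ < τ/2} :=
        isOpen_lt (Continuous.dist hcontproj continuous_const) continuous_const
      filter_upwards [hU.mem_nhds hd] with q hq
      simp only [cylinderFun, truncatedCone, if_pos (le_of_lt hq)]
    rw [hev.fderiv_eq]
    have hD : HasFDerivAt (fun q : EuclideanSpace ℝ (Fin (n+1)) => Real.exp (-(lastCoord q)/2) * ϱ)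
        (ϱ • (Real.exp (-y/2) • ((-(1/2) : ℝ) • L))) p := hf₁.mul_const ϱ
    rw [hD.fderiv]
    set D := ϱ • (Real.exp (-y/2) • ((-(1/2) : ℝ) • L)) with hDdef
    have hind : (Metric.ball x₀ τ \ Metric.closedBall x₀ (τ/2)).indicator
        (fun _ => 4 * ϱ^2 / τ^2) (projFirst p) = 0 := by
      apply Set.indicator_of_notMem
      intro hmem
      exact hmem.2 (Metric.mem_closedBall.mpr hd.le)
    rw [hind, opNorm_sq_eq_sum D, Fin.sum_univ_castSucc]
    have hlastval : D (EuclideanSpace.single (Fin.last n) 1)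
        = ϱ * (Real.exp (-y/2) * (-(1/2))) := by
      simp only [hDdef, ContinuousLinearMap.smul_apply]
      rw [hLlast]
      simp only [smul_eq_mul, mul_one]
    have hcastval : ∀ j : Fin n, D (EuclideanSpace.single j.castSucc 1) = 0 := by
      intro j
      simp only [hDdef, ContinuousLinearMap.smul_apply]
      rw [hLcast]
      simp only [smul_eq_mul, mul_zero]
    simp_rw [hcastval, hlastval]
    have hle : (ϱ * (Real.exp (-y/2) * (-(1/2))))^2 ≤ Real.exp (-y) * (0 + ϱ^2/4) := by
      rw [← hexpsq]; exact le_of_eq (by ring)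
    simpa using hle
  · exact absurd hd h1
  rcases lt_trichotomy (dist (projFirst p) x₀) τ with hd2 | hd2 | hd2
  · -- annulus
    have hz : P p - x₀ ≠ 0 := by
      rw [projCLM_coe]
      intro h
      rw [sub_eq_zero] at h
      rw [h] at hd
      simp at hd
      linarith
    have hdist : dist (projFirst p) x₀ = ‖P p - x₀‖ := by
      rw [projCLM_coe, dist_eq_norm]
    have hMdiff : DifferentiableAt ℝ (fun z : EuclideanSpace ℝ (Fin n) => ‖z‖) (P p - x₀) :=
      ((contDiffAt_norm ℝ hz).differentiableAt one_ne_zero)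
    set M := fderiv ℝ (fun z : EuclideanSpace ℝ (Fin n) => ‖z‖) (P p - x₀) with hM
    have hMnorm : ‖M‖ ≤ 1 := by
      have := norm_fderiv_le_of_lipschitz ℝ (lipschitzWith_one_norm
        (E := EuclideanSpace ℝ (Fin n))) (x₀ := P p - x₀)
      simpa using this
    have hN : HasFDerivAt (fun q : EuclideanSpace ℝ (Fin (n+1)) => ‖P q - x₀‖)
        (M.comp P) p := by
      have hsub : HasFDerivAt (fun q : EuclideanSpace ℝ (Fin (n+1)) => P q - x₀) (P) p :=
        P.hasFDerivAt.sub_const x₀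
      exact (hMdiff.hasFDerivAt).comp p hsub
    have hg : HasFDerivAt (fun q : EuclideanSpace ℝ (Fin (n+1)) => (2*ϱ/τ) * (τ - ‖P q - x₀‖))
        ((2*ϱ/τ) • (-(M.comp P))) p := (hN.const_sub τ).const_mul (2*ϱ/τ)
    have hev : cylinderFun x₀ τ ϱ =ᶠ[𝓝 p]
        fun q => Real.exp (-(lastCoord q)/2) * ((2*ϱ/τ) * (τ - ‖P q - x₀‖)) := by
      have hU : IsOpen {q : EuclideanSpace ℝ (Fin (n+1)) |
          τ/2 < dist (projFirst q) x₀ ∧ dist (projFirst q) x₀ < τ} := by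
        apply IsOpen.inter
        · exact isOpen_lt continuous_const (Continuous.dist hcontproj continuous_const)
        · exact isOpen_lt (Continuous.dist hcontproj continuous_const) continuous_const
      filter_upwards [hU.mem_nhds ⟨hd, hd2⟩] with q hq
      have : dist (projFirst q) x₀ = ‖P q - x₀‖ := by rw [projCLM_coe, dist_eq_norm]
      simp only [cylinderFun, truncatedCone, if_neg (not_le.mpr hq.1), if_pos hq.2]
      rw [this]
    rw [hev.fderiv_eq]
    have hD : HasFDerivAt (fun q : EuclideanSpace ℝ (Fin (n+1)) =>
        Real.exp (-(lastCoord q)/2) * ((2*ϱ/τ) * (τ - ‖P q - x₀‖)))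
        (Real.exp (-y/2) • ((2*ϱ/τ) • (-(M.comp P))) +
          ((2*ϱ/τ) * (τ - ‖P p - x₀‖)) • (Real.exp (-y/2) • ((-(1/2) : ℝ) • L))) p :=
      hf₁.mul hg
    rw [hD.fderiv]
    set D := Real.exp (-y/2) • ((2*ϱ/τ) • (-(M.comp P))) +
          ((2*ϱ/τ) * (τ - ‖P p - x₀‖)) • (Real.exp (-y/2) • ((-(1/2) : ℝ) • L)) with hDdef
    set gval := (2*ϱ/τ) * (τ - ‖P p - x₀‖) with hgval
    have hgval_pos : 0 < gval := by
      apply mul_pos (by positivity)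
      rw [← hdist]; linarith
    have hgval_le : gval ≤ ϱ := by
      rw [hgval]
      have hdd : τ - ‖P p - x₀‖ ≤ τ/2 := by rw [← hdist]; linarith
      calc (2*ϱ/τ) * (τ - ‖P p - x₀‖) ≤ (2*ϱ/τ) * (τ/2) := by
            apply mul_le_mul_of_nonneg_left hdd (by positivity)
        _ = ϱ := by field_simp
    have hsum : ‖D‖^2 = ∑ i, (D (EuclideanSpace.single i 1))^2 := opNorm_sq_eq_sum D
    rw [hsum, Fin.sum_univ_castSucc]
    have hlastval : D (EuclideanSpace.single (Fin.last n) 1) = gval * (Real.exp (-y/2) * (-(1/2))) := by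
      simp only [hDdef, ContinuousLinearMap.add_apply, ContinuousLinearMap.smul_apply,
        ContinuousLinearMap.neg_apply, ContinuousLinearMap.comp_apply]
      rw [projCLM_single_last, hLlast]
      simp only [map_zero, smul_eq_mul, mul_zero, neg_zero, zero_add, mul_one]
      try ring
    have hcastval : ∀ j : Fin n, D (EuclideanSpace.single j.castSucc 1) =
        Real.exp (-y/2) * ((2*ϱ/τ) * (-(M (EuclideanSpace.single j 1)))) := by
      intro j
      simp only [hDdef, ContinuousLinearMap.add_apply, ContinuousLinearMap.smul_apply,
        ContinuousLinearMap.neg_apply, ContinuousLinearMap.comp_apply]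
      rw [projCLM_single_castSucc, hLcast]
      simp only [smul_eq_mul, mul_zero, add_zero, neg_zero]
      try ring
    have hMsum : ∑ j : Fin n, (M (EuclideanSpace.single j 1))^2 ≤ 1 := by
      rw [← opNorm_sq_eq_sum]
      calc ‖M‖^2 ≤ 1^2 := pow_le_pow_left₀ (norm_nonneg _) hMnorm 2
        _ = 1 := one_pow 2
    have hind : (Metric.ball x₀ τ \ Metric.closedBall x₀ (τ/2)).indicator
        (fun _ => 4 * ϱ^2 / τ^2) (projFirst p) = 4 * ϱ^2 / τ^2 := by
      apply Set.indicator_of_mem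
      exact ⟨Metric.mem_ball.mpr hd2, fun hc => absurd (Metric.mem_closedBall.mp hc)
        (not_le.mpr hd)⟩
    rw [hind]
    have hterm1 : ∑ j : Fin n, (D (EuclideanSpace.single j.castSucc 1))^2
        ≤ Real.exp (-y) * (4 * ϱ^2 / τ^2) := by
      simp_rw [hcastval]
      have : ∀ j : Fin n, (Real.exp (-y/2) * ((2*ϱ/τ) * (-(M (EuclideanSpace.single j 1)))))^2
          = (Real.exp (-y) * (4 * ϱ^2 / τ^2)) * (M (EuclideanSpace.single j 1))^2 := by
        intro j
        rw [← hexpsq]; ring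
      simp_rw [this, ← Finset.mul_sum]
      calc (Real.exp (-y) * (4 * ϱ^2 / τ^2)) * ∑ j : Fin n, (M (EuclideanSpace.single j 1))^2
          ≤ (Real.exp (-y) * (4 * ϱ^2 / τ^2)) * 1 :=
            mul_le_mul_of_nonneg_left hMsum (by positivity)
        _ = Real.exp (-y) * (4 * ϱ^2 / τ^2) := mul_one _
    have hterm2 : (D (EuclideanSpace.single (Fin.last n) 1))^2 ≤ Real.exp (-y) * (ϱ^2/4) := by
      rw [hlastval]
      have : (gval * (Real.exp (-y/2) * (-(1/2))))^2 = Real.exp (-y) * (gval^2/4) := by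
        rw [← hexpsq]; ring
      rw [this]
      apply mul_le_mul_of_nonneg_left _ (Real.exp_pos _).le
      have : gval^2 ≤ ϱ^2 := pow_le_pow_left₀ hgval_pos.le hgval_le 2
      linarith
    calc (∑ j : Fin n, (D (EuclideanSpace.single j.castSucc 1))^2) +
          (D (EuclideanSpace.single (Fin.last n) 1))^2
        ≤ Real.exp (-y) * (4 * ϱ^2 / τ^2) + Real.exp (-y) * (ϱ^2/4) := add_le_add hterm1 hterm2
      _ = Real.exp (-y) * (4 * ϱ^2 / τ^2 + ϱ^2/4) := by ring
  · exact absurd hd2 h2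
  · -- outside
    have hev : cylinderFun x₀ τ ϱ =ᶠ[𝓝 p] fun _ => (0:ℝ) := by
      have hU : IsOpen {q : EuclideanSpace ℝ (Fin (n+1)) | τ < dist (projFirst q) x₀} :=
        isOpen_lt continuous_const (Continuous.dist hcontproj continuous_const)
      filter_upwards [hU.mem_nhds hd2] with q hq
      have hq' : τ < dist (projFirst q) x₀ := hq
      have h1' : ¬ dist (projFirst q) x₀ ≤ τ/2 := by push_neg; linarith
      have h2' : ¬ dist (projFirst q) x₀ < τ := by push_neg; exact le_of_lt hq'
      simp only [cylinderFun, truncatedCone, if_neg h1', if_neg h2', mul_zero]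
    rw [hev.fderiv_eq, fderiv_fun_const]
    simp only [Pi.zero_apply, norm_zero]
    rw [zero_pow (by norm_num)]
    have : (0:ℝ) ≤ (Metric.ball x₀ τ \ Metric.closedBall x₀ (τ/2)).indicator
        (fun _ => 4 * ϱ^2 / τ^2) (projFirst p) := by
      apply Set.indicator_nonneg; intro _ _; positivity
    positivity

/-- With `h = 2ω_n τ^{n−2}(1 − 2^{−n}) + |Ω|/8`, for essentially bounded `β ≥ β₀ > 0`
a.e. on `Ω` and continuous `F ≥ 0` on `[0, ∞)`, one has
`∫_Ω β F(ω_τ^ϱ) ≥ [β₀ ω_n τⁿ F(ϱ)/(2ⁿ h ϱ²)] · (1/2)∫_{Ω×(0,∞)} |∇w_τ^ϱ|²`. -/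
theorem weighted_potential_vs_gradient_energy
    {n : ℕ} (hn : 2 ≤ n) (Ω : Set (EuclideanSpace ℝ (Fin n)))
    (hΩopen : IsOpen Ω) (hΩbdd : Bornology.IsBounded Ω)
    (x₀ : EuclideanSpace ℝ (Fin n)) (hx₀ : x₀ ∈ Ω)
    (τ : ℝ) (hτ : 0 < τ) (hball : Metric.ball x₀ τ ⊆ Ω)
    (ϱ : ℝ) (hϱ : 0 < ϱ)
    (β : EuclideanSpace ℝ (Fin n) → ℝ) (hβmeas : Measurable β)
    (C : ℝ) (hβbdd : ∀ᵐ x ∂(volume.restrict Ω), |β x| ≤ C)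
    (β₀ : ℝ) (hβ₀ : 0 < β₀) (hβlb : ∀ᵐ x ∂(volume.restrict Ω), β₀ ≤ β x)
    (F : ℝ → ℝ) (hFcont : Continuous F) (hFnonneg : ∀ t : ℝ, 0 ≤ t → 0 ≤ F t) :
    (β₀ * unitBallVolume n * τ ^ n * F ϱ /
        (2 ^ n * (2 * unitBallVolume n * τ ^ (n - 2) * (1 - 1 / 2 ^ n)
          + (volume Ω).toReal / 8) * ϱ ^ 2)) *
      ((1 / 2) *
        ∫ p in {p : EuclideanSpace ℝ (Fin (n + 1)) | projFirst p ∈ Ω ∧ 0 < lastCoord p},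
          ‖fderiv ℝ (cylinderFun x₀ τ ϱ) p‖ ^ 2 ∂volume)
      ≤ ∫ x in Ω, β x * F (truncatedCone x₀ τ ϱ x) ∂volume := by
  classical
  set V := unitBallVolume n with hVdef
  have hVpos : 0 < V := unitBallVolume_pos
  have hΩvol : volume Ω < ⊤ := hΩbdd.measure_lt_top
  set ann := Metric.ball x₀ τ \ Metric.closedBall x₀ (τ/2) with hanndef
  set w := cylinderFun x₀ τ ϱ with hwdef
  set S := {p : EuclideanSpace ℝ (Fin (n + 1)) | projFirst p ∈ Ω ∧ 0 < lastCoord p} with hSdef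
  set G := fun p : EuclideanSpace ℝ (Fin (n+1)) =>
    Real.exp (-(lastCoord p)) * (ann.indicator (fun _ => 4*ϱ^2/τ^2) (projFirst p) + ϱ^2/4)
    with hGdef
  haveI : Nontrivial (EuclideanSpace ℝ (Fin n)) := by
    refine nontrivial_of_ne (EuclideanSpace.single ⟨0, by omega⟩ (1:ℝ)) 0 ?_
    intro h
    have h0 := congrArg (fun v : EuclideanSpace ℝ (Fin n) => v ⟨0, by omega⟩) h
    rw [EuclideanSpace.single_apply] at h0
    simp at h0
  -- the union of the two singular cylinders is null
  have hZ : volume {p : EuclideanSpace ℝ (Fin (n+1)) |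
      dist (projFirst p) x₀ = τ/2 ∨ dist (projFirst p) x₀ = τ} = 0 := by
    have hA : volume (Metric.sphere x₀ (τ/2) ∪ Metric.sphere x₀ τ) = 0 :=
      measure_union_null (Measure.addHaar_sphere volume x₀ (τ/2))
        (Measure.addHaar_sphere volume x₀ τ)
    have hpre : {p : EuclideanSpace ℝ (Fin (n+1)) |
        dist (projFirst p) x₀ = τ/2 ∨ dist (projFirst p) x₀ = τ}
        = (splitEquiv n) ⁻¹' (Set.univ ×ˢ (Metric.sphere x₀ (τ/2) ∪ Metric.sphere x₀ τ)) := by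
      ext p
      simp [splitEquiv_apply, Set.mem_prod, Metric.mem_sphere, dist_eq_norm]
    rw [hpre, (splitEquiv_measurePreserving n).measure_preimage
      ((MeasurableSet.univ.prod ((Metric.isClosed_sphere.measurableSet).union
        Metric.isClosed_sphere.measurableSet)).nullMeasurableSet),
      Measure.volume_eq_prod, Measure.prod_prod, hA, mul_zero]
  have hae : ∀ᵐ p : EuclideanSpace ℝ (Fin (n+1)) ∂volume, ‖fderiv ℝ w p‖^2 ≤ G p := by
    filter_upwards [measure_eq_zero_iff_ae_notMem.mp hZ] with p hp
    simp only [Set.mem_setOf_eq, not_or] at hp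
    exact fderiv_cylinder_bound x₀ hτ hϱ p hp.1 hp.2
  have hSpre : S = (splitEquiv n) ⁻¹' ((Set.Ioi 0) ×ˢ Ω) := by
    ext p
    simp only [hSdef, Set.mem_setOf_eq, Set.mem_preimage, splitEquiv_apply, Set.mem_prod,
      Set.mem_Ioi]
    tauto
  have hint1 : IntegrableOn (fun y : ℝ => Real.exp (-y)) (Set.Ioi 0) := by
    have := exp_neg_integrableOn_Ioi 0 (zero_lt_one)
    simpa using this
  have hannmeas : MeasurableSet ann :=
    measurableSet_ball.diff measurableSet_closedBall
  have hint2a : IntegrableOn (ann.indicator (fun _ => 4*ϱ^2/τ^2)) Ω :=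
    (integrableOn_const hΩvol.ne).indicator hannmeas
  have hint2b : IntegrableOn (fun _ : EuclideanSpace ℝ (Fin n) => ϱ^2/4) Ω :=
    integrableOn_const hΩvol.ne
  have hint2 : IntegrableOn (fun x => ann.indicator (fun _ => 4*ϱ^2/τ^2) x + ϱ^2/4) Ω :=
    hint2a.add hint2b
  set gz := fun z : ℝ × EuclideanSpace ℝ (Fin n) =>
    Real.exp (-z.1) * (ann.indicator (fun _ => 4*ϱ^2/τ^2) z.2 + ϱ^2/4) with hgz
  have hGcomp : G = fun p => gz (splitEquiv n p) := by
    funext p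
    simp only [hgz, hGdef, splitEquiv_apply]
  have hgzint : Integrable gz ((volume : Measure (ℝ × EuclideanSpace ℝ (Fin n))).restrict
      ((Set.Ioi 0) ×ˢ Ω)) := by
    rw [Measure.volume_eq_prod, ← Measure.prod_restrict]
    exact Integrable.mul_prod hint1 hint2
  have hGint : IntegrableOn G S := by
    rw [hSpre, hGcomp]
    exact integrableOn_comp_splitEquiv gz _ hgzint
  have hannsub : ann ⊆ Ω := fun x hx => hball hx.1
  have hGval : ∫ p in S, G p ∂volume
      = (volume ann).toReal * (4*ϱ^2/τ^2) + (volume Ω).toReal * (ϱ^2/4) := by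
    rw [hGcomp, hSpre, setIntegral_comp_splitEquiv gz _]
    simp only [hgz]
    rw [Measure.volume_eq_prod, ← Measure.prod_restrict,
      integral_prod_mul (f := fun y : ℝ => Real.exp (-y))
        (g := fun x : EuclideanSpace ℝ (Fin n) =>
          ann.indicator (fun _ => 4*ϱ^2/τ^2) x + ϱ^2/4),
      integral_exp_neg_Ioi_zero, one_mul,
      integral_add hint2a hint2b, setIntegral_indicator hannmeas,
      Set.inter_eq_right.mpr hannsub, setIntegral_const, setIntegral_const]
    simp only [smul_eq_mul, measureReal_def]
  have hfae : ∀ᵐ p ∂(volume.restrict S), ‖fderiv ℝ w p‖^2 ≤ G p := ae_restrict_of_ae hae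
  have hfint : IntegrableOn (fun p => ‖fderiv ℝ w p‖^2) S := by
    apply Integrable.mono' hGint
      ((measurable_fderiv ℝ w).norm.pow_const 2).aestronglyMeasurable
    filter_upwards [hfae] with p hp
    rwa [Real.norm_eq_abs, abs_of_nonneg (by positivity)]
  have hIle : ∫ p in S, ‖fderiv ℝ w p‖^2 ∂volume ≤ ∫ p in S, G p ∂volume :=
    integral_mono_ae hfint hGint hfae
  have hballsub : Metric.closedBall x₀ (τ/2) ⊆ Metric.ball x₀ τ :=
    Metric.closedBall_subset_ball (by linarith)
  have hvolball : (volume (Metric.ball x₀ τ)).toReal = V * τ^n :=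
    euclid_volume_ball_toReal (by omega) x₀ hτ.le
  have hvolcball : (volume (Metric.closedBall x₀ (τ/2))).toReal = V * (τ/2)^n :=
    euclid_volume_closedBall_toReal (by omega) x₀ (by linarith)
  have hvolann : (volume ann).toReal = V * τ^n - V * (τ/2)^n := by
    rw [hanndef, measure_diff hballsub
      measurableSet_closedBall.nullMeasurableSet
      measure_closedBall_lt_top.ne,
      ENNReal.toReal_sub_of_le (measure_mono hballsub) measure_ball_lt_top.ne,
      hvolball, hvolcball]
  have hEnergy : ∫ p in S, ‖fderiv ℝ w p‖^2 ∂volume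
      ≤ 2 * (2 * V * τ^(n-2) * (1 - 1/2^n) + (volume Ω).toReal/8) * ϱ^2 := by
    refine le_trans hIle ?_
    rw [hGval, hvolann]
    obtain ⟨m, rfl⟩ : ∃ m, n = m + 2 := ⟨n - 2, by omega⟩
    simp only [Nat.add_sub_cancel]
    rw [div_pow]
    have h2n : (0:ℝ) < 2^(m+2) := by positivity
    have hτn : (0:ℝ) < τ^(m+2) := by positivity
    have hexp : τ^(m+2) = τ^m * τ^2 := by rw [pow_add]
    rw [hexp]
    have hne : τ ≠ 0 := hτ.ne'
    apply le_of_eq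
    field_simp
    ring
  -- lower bound for the right-hand side
  obtain ⟨M, hM⟩ := (isCompact_Icc : IsCompact (Set.Icc (0:ℝ) ϱ)).exists_bound_of_continuousOn
    hFcont.continuousOn
  have hM0 : 0 ≤ M := le_trans (norm_nonneg (F 0)) (hM 0 ⟨le_refl 0, hϱ.le⟩)
  have hconeIcc := truncatedCone_mem_Icc x₀ hτ hϱ
  have hFcm : Measurable fun x => F (truncatedCone x₀ τ ϱ x) :=
    hFcont.measurable.comp (truncatedCone_measurable x₀ τ ϱ)
  have hFb : ∀ x, |F (truncatedCone x₀ τ ϱ x)| ≤ M := fun x => by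
    have := hM _ (hconeIcc x); rwa [Real.norm_eq_abs] at this
  have hFnn : ∀ x, 0 ≤ F (truncatedCone x₀ τ ϱ x) := fun x => hFnonneg _ (hconeIcc x).1
  have hint3 : IntegrableOn (fun x => β x * F (truncatedCone x₀ τ ϱ x)) Ω := by
    apply Integrable.mono' (g := fun _ => C * M) (integrableOn_const hΩvol.ne)
      (hβmeas.mul hFcm).aestronglyMeasurable
    filter_upwards [hβbdd] with x hx
    rw [Real.norm_eq_abs, Pi.mul_apply, abs_mul]
    exact mul_le_mul hx (hFb x) (abs_nonneg _) ((abs_nonneg (β x)).trans hx)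
  have hint4 : IntegrableOn (fun x => β₀ * F (truncatedCone x₀ τ ϱ x)) Ω := by
    apply Integrable.mono' (g := fun _ => β₀ * M) (integrableOn_const hΩvol.ne)
      (measurable_const.mul hFcm).aestronglyMeasurable
    refine Filter.Eventually.of_forall fun x => ?_
    rw [Real.norm_eq_abs, Pi.mul_apply, abs_mul, abs_of_pos hβ₀]
    exact mul_le_mul_of_nonneg_left (hFb x) hβ₀.le
  have hI1 : ∫ x in Ω, β₀ * F (truncatedCone x₀ τ ϱ x) ∂volume
      ≤ ∫ x in Ω, β x * F (truncatedCone x₀ τ ϱ x) ∂volume := by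
    apply integral_mono_ae hint4 hint3
    filter_upwards [hβlb] with x hx
    exact mul_le_mul_of_nonneg_right hx (hFnn x)
  have hsmallball : Metric.ball x₀ (τ/2) ⊆ Ω := fun x hx =>
    hball (Metric.ball_subset_ball (by linarith) hx)
  have hI3 : ∫ x in Metric.ball x₀ (τ/2), β₀ * F (truncatedCone x₀ τ ϱ x) ∂volume
      ≤ ∫ x in Ω, β₀ * F (truncatedCone x₀ τ ϱ x) ∂volume := by
    apply setIntegral_mono_set hint4
      (Filter.Eventually.of_forall fun x => mul_nonneg hβ₀.le (hFnn x))
    exact HasSubset.Subset.eventuallyLE hsmallball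
  have hI4 : ∫ x in Metric.ball x₀ (τ/2), β₀ * F (truncatedCone x₀ τ ϱ x) ∂volume
      = (V * (τ/2)^n) * (β₀ * F ϱ) := by
    rw [setIntegral_congr_fun measurableSet_ball
      (g := fun _ => β₀ * F ϱ) ?_]
    · rw [setIntegral_const, smul_eq_mul, measureReal_def,
        euclid_volume_ball_toReal (by omega) x₀ (by linarith)]
    · intro x hx
      have hxd : dist x x₀ < τ/2 := Metric.mem_ball.mp hx
      simp only [truncatedCone, if_pos hxd.le]
  -- final assembly
  set h := 2 * V * τ^(n-2) * (1 - 1/2^n) + (volume Ω).toReal/8 with hhdef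
  have h2npos : (1:ℝ) < 2^n := one_lt_pow₀ (by norm_num) (by omega)
  have hhpos : 0 < h := by
    have h1 : (0:ℝ) < 1 - 1/2^n := by
      rw [sub_pos, div_lt_one (by positivity)]
      exact h2npos
    have h2 : 0 ≤ (volume Ω).toReal := ENNReal.toReal_nonneg
    have h3 : (0:ℝ) < τ^(n-2) := by positivity
    positivity
  have hFϱ : 0 ≤ F ϱ := hFnonneg ϱ hϱ.le
  have hK : 0 ≤ β₀ * V * τ^n * F ϱ / (2^n * h * ϱ^2) := by positivity
  calc β₀ * V * τ^n * F ϱ / (2^n * h * ϱ^2) *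
        ((1/2) * ∫ p in S, ‖fderiv ℝ w p‖^2 ∂volume)
      ≤ β₀ * V * τ^n * F ϱ / (2^n * h * ϱ^2) * ((1/2) * (2 * h * ϱ^2)) := by
        apply mul_le_mul_of_nonneg_left _ hK
        apply mul_le_mul_of_nonneg_left hEnergy (by norm_num)
    _ = (V * (τ/2)^n) * (β₀ * F ϱ) := by
        rw [div_pow]
        field_simp
    _ = ∫ x in Metric.ball x₀ (τ/2), β₀ * F (truncatedCone x₀ τ ϱ x) ∂volume := hI4.symm
    _ ≤ ∫ x in Ω, β₀ * F (truncatedCone x₀ τ ϱ x) ∂volume := hI3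
    _ ≤ ∫ x in Ω, β x * F (truncatedCone x₀ τ ϱ x) ∂volume := hI1
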